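/- arXiv:1410.6294 — 3 statements merged into one kernel-verified Lean document; each statement's English description precedes it below -/
import Mathlib

section
/- (Delsarte clique bound.) Let Γ be a distance-regular graph of diameter d ≥ 2 with valency k, and let θ_min denote the smallest eigenvalue of its adjacency matrix (so θ_min < 0). Then every clique C of Γ satisfies |C| ≤ 1 + k/(−θ_min). -/
set_option linter.unusedSectionVars false
set_option maxHeartbeats 1000000

open SimpleGraph
open Polynomial Matrix Finset

section helpers
variable {V : Type*} [Fintype V] [DecidableEq V]

lemma pow_mulVec_eig (A : Matrix V V ℝ) {x : V → ℝ} {θ : ℝ} (h : A *ᵥ x = θ • x) (m : ℕ) :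
    (A ^ m) *ᵥ x = θ ^ m • x := by
  induction m with
  | zero => simp
  | succ m ih =>
      rw [pow_succ, ← Matrix.mulVec_mulVec, h, Matrix.mulVec_smul, ih, smul_smul, pow_succ,
        mul_comm]

lemma aeval_mulVec_eig (A : Matrix V V ℝ) {x : V → ℝ} {θ : ℝ} (h : A *ᵥ x = θ • x) (q : ℝ[X]) :
    (aeval A q) *ᵥ x = q.eval θ • x := by
  induction q using Polynomial.induction_on' with
  | add p q hp hq => rw [map_add, Matrix.add_mulVec, hp, hq, eval_add, add_smul]
  | monomial m a =>
      rw [aeval_monomial, eval_monomial, Algebra.algebraMap_eq_smul_one, smul_mul_assoc, one_mul,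
        Matrix.smul_mulVec, pow_mulVec_eig A h, smul_smul]

lemma eq_zero_of_mulVec_eigbasis {A : Matrix V V ℝ} (hA : A.IsHermitian) (M : Matrix V V ℝ)
    (h : ∀ i, M *ᵥ ⇑(hA.eigenvectorBasis i) = 0) : M = 0 := by
  have hinj := (Matrix.toLin' (R := ℝ) (m := V) (n := V)).injective
  apply hinj
  let b' : Module.Basis V ℝ (V → ℝ) :=
    hA.eigenvectorBasis.toBasis.map (WithLp.linearEquiv 2 ℝ (V → ℝ))
  refine b'.ext fun i => ?_
  have : b' i = ⇑(hA.eigenvectorBasis i) := by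
    simp [b', OrthonormalBasis.coe_toBasis]
  rw [this]
  simp [Matrix.toLin'_apply, h i]

lemma hasEigenvalue_toLin'_eigenvalues {A : Matrix V V ℝ} (hA : A.IsHermitian) (i : V) :
    Module.End.HasEigenvalue (Matrix.toLin' A) (hA.eigenvalues i) := by
  apply Module.End.hasEigenvalue_of_hasEigenvector (x := ⇑(hA.eigenvectorBasis i))
  constructor
  · rw [Module.End.mem_eigenspace_iff, Matrix.toLin'_apply, hA.mulVec_eigenvectorBasis]
  · have := hA.eigenvectorBasis.toBasis.ne_zero i
    rw [OrthonormalBasis.coe_toBasis] at this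
    intro hc
    exact this (by ext j; exact congrFun hc j)

lemma annihilate_of_eval_eigenvalues_zero {A : Matrix V V ℝ} (hA : A.IsHermitian) (q : ℝ[X])
    (h : ∀ i, q.eval (hA.eigenvalues i) = 0) : aeval A q = 0 :=
  eq_zero_of_mulVec_eigbasis hA _ fun i => by
    rw [aeval_mulVec_eig A (hA.mulVec_eigenvectorBasis i) q, h i, zero_smul]

end helpers

section graph

variable {V : Type*} [Fintype V] [DecidableEq V] (G : SimpleGraph V) [DecidableRel G.Adj]
  {d : ℕ} {b c : ℕ → ℕ} {k : ℕ}

variable (hconn : G.Connected) (hdiam : G.diam = d) (hd : 2 ≤ d)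
  (h3 : ∀ i ≤ d, ∀ u v : V, G.dist u v = i →
      {w : V | G.Adj v w ∧ G.dist u w = i + 1}.ncard = b i)
  (h4 : ∀ i ≤ d, ∀ u v : V, G.dist u v = i →
      {w : V | G.Adj v w ∧ G.dist u w = i - 1}.ncard = c i)
  (hk : b 0 = k)

include hdiam hd in
lemma dist_le_d (u v : V) : G.dist u v ≤ d := by
  rw [← hdiam]
  exact SimpleGraph.dist_le_diam (SimpleGraph.ediam_ne_top_of_diam_ne_zero (by omega))

/-- the set of neighbours of `v` at distance `m` from `u` -/
noncomputable def FF (u v : V) (m : ℕ) : Finset V :=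
  (G.neighborFinset v).filter (fun w => G.dist u w = m)

lemma mem_FF {u v w : V} {m : ℕ} : w ∈ FF G u v m ↔ G.Adj v w ∧ G.dist u w = m := by
  simp [FF, Finset.mem_filter, SimpleGraph.mem_neighborFinset]

lemma card_FF_eq_ncard (u v : V) (m : ℕ) :
    {w : V | G.Adj v w ∧ G.dist u w = m}.ncard = (FF G u v m).card := by
  rw [show {w : V | G.Adj v w ∧ G.dist u w = m} = ↑(FF G u v m) by ext w; simp [mem_FF],
    Set.ncard_coe_finset]

include hconn in
lemma FF_empty_of {u v : V} {i m : ℕ} (h : G.dist u v = i) (hm : m + 1 < i ∨ i + 1 < m) :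
    FF G u v m = ∅ := by
  ext w
  simp only [mem_FF, Finset.notMem_empty, iff_false, not_and]
  intro hadj hdist
  have h1 : G.dist u w ≤ G.dist u v + G.dist v w := hconn.dist_triangle
  have h2 : G.dist u v ≤ G.dist u w + G.dist w v := hconn.dist_triangle
  have hvw : G.dist v w = 1 := SimpleGraph.dist_eq_one_iff_adj.mpr hadj
  have hwv : G.dist w v = 1 := SimpleGraph.dist_eq_one_iff_adj.mpr hadj.symm
  omega

include hconn in
lemma FF_zero {u v : V} (h : G.dist u v = 0) : FF G u v 0 = ∅ := by
  have huv : u = v := (hconn.dist_eq_zero_iff).mp h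
  ext w
  simp only [mem_FF, Finset.notMem_empty, iff_false, not_and]
  intro hadj hdist
  have : u = w := (hconn.dist_eq_zero_iff).mp hdist
  subst this; subst huv
  exact G.irrefl hadj

include hconn h3 hk in
lemma deg_eq (v : V) : G.degree v = k := by
  have h0 := h3 0 (Nat.zero_le d) v v (by simp)
  rw [card_FF_eq_ncard] at h0
  rw [← hk, ← h0, ← SimpleGraph.card_neighborFinset_eq_degree]
  congr 1
  ext w
  simp only [mem_FF, SimpleGraph.mem_neighborFinset, zero_add]
  exact ⟨fun h => ⟨h, SimpleGraph.dist_eq_one_iff_adj.mpr h⟩, And.left⟩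

include hconn hdiam hd h3 h4 hk in
lemma card_FF_sum {u v : V} {i : ℕ} (hi : 1 ≤ i) (h : G.dist u v = i) :
    (FF G u v (i - 1)).card + (FF G u v i).card + (FF G u v (i + 1)).card = k := by
  have hid : i ≤ d := h ▸ dist_le_d G hdiam hd u v
  classical
  have hpart : FF G u v (i - 1) ∪ FF G u v i ∪ FF G u v (i + 1) = G.neighborFinset v := by
    ext w
    simp only [Finset.mem_union, mem_FF, SimpleGraph.mem_neighborFinset]
    constructor
    · rintro ((⟨h1, _⟩ | ⟨h1, _⟩) | ⟨h1, _⟩) <;> exact h1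
    · intro hadj
      have h1 : G.dist u w ≤ G.dist u v + G.dist v w := hconn.dist_triangle
      have h2 : G.dist u v ≤ G.dist u w + G.dist w v := hconn.dist_triangle
      have hvw : G.dist v w = 1 := SimpleGraph.dist_eq_one_iff_adj.mpr hadj
      have hwv : G.dist w v = 1 := SimpleGraph.dist_eq_one_iff_adj.mpr hadj.symm
      have : G.dist u w = i - 1 ∨ G.dist u w = i ∨ G.dist u w = i + 1 := by omega
      rcases this with h' | h' | h'
      · exact Or.inl (Or.inl ⟨hadj, h'⟩)
      · exact Or.inl (Or.inr ⟨hadj, h'⟩)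
      · exact Or.inr ⟨hadj, h'⟩
  have hdisj1 : Disjoint (FF G u v (i - 1)) (FF G u v i) := by
    rw [Finset.disjoint_left]
    intro w hw hw'
    rw [mem_FF] at hw hw'
    omega
  have hdisj2 : Disjoint (FF G u v (i - 1) ∪ FF G u v i) (FF G u v (i + 1)) := by
    rw [Finset.disjoint_left]
    intro w hw hw'
    rw [Finset.mem_union, mem_FF, mem_FF] at hw
    rw [mem_FF] at hw'
    omega
  have := congrArg Finset.card hpart
  rw [Finset.card_union_of_disjoint hdisj2, Finset.card_union_of_disjoint hdisj1,
    SimpleGraph.card_neighborFinset_eq_degree, deg_eq G hconn h3 hk] at this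
  omega

include hconn hdiam hd h3 h4 hk in
lemma card_FF_eq {u v u' v' : V} {i : ℕ} (m : ℕ) (h : G.dist u v = i) (h' : G.dist u' v' = i) :
    (FF G u v m).card = (FF G u' v' m).card := by
  have hid : i ≤ d := h ▸ dist_le_d G hdiam hd u v
  by_cases hm1 : m = i + 1
  · subst hm1
    rw [← card_FF_eq_ncard, ← card_FF_eq_ncard, h3 i hid u v h, h3 i hid u' v' h']
  · by_cases hi0 : i = 0
    · subst hi0
      by_cases hm0 : m = 0
      · subst hm0; rw [FF_zero G hconn h, FF_zero G hconn h']
      · rw [FF_empty_of G hconn h (by omega), FF_empty_of G hconn h' (by omega)]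
    · by_cases hmm : m = i - 1
      · subst hmm
        rw [← card_FF_eq_ncard, ← card_FF_eq_ncard, h4 i hid u v h, h4 i hid u' v' h']
      · by_cases hmi : m = i
        · subst hmi
          have e1 := card_FF_sum G hconn hdiam hd h3 h4 hk (by omega) h
          have e2 := card_FF_sum G hconn hdiam hd h3 h4 hk (by omega) h'
          have e3 : (FF G u v (m - 1)).card = (FF G u' v' (m - 1)).card := by
            rw [← card_FF_eq_ncard, ← card_FF_eq_ncard, h4 m hid u v h, h4 m hid u' v' h']
          have e4 : (FF G u v (m + 1)).card = (FF G u' v' (m + 1)).card := by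
            rw [← card_FF_eq_ncard, ← card_FF_eq_ncard, h3 m hid u v h, h3 m hid u' v' h']
          omega
        · rw [FF_empty_of G hconn h (by omega), FF_empty_of G hconn h' (by omega)]

include hconn hdiam hd h3 h4 hk in
lemma walk_regular (j : ℕ) : ∀ u v u' v' : V, G.dist u v = G.dist u' v' →
    ((G.adjMatrix ℝ) ^ j) u v = ((G.adjMatrix ℝ) ^ j) u' v' := by
  induction j with
  | zero =>
      intro u v u' v' h
      rw [pow_zero, Matrix.one_apply, Matrix.one_apply]
      by_cases huv : u = v
      · have : G.dist u' v' = 0 := by rw [← h, huv, SimpleGraph.dist_self]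
        rw [if_pos huv, if_pos ((hconn.dist_eq_zero_iff).mp this)]
      · have : G.dist u v ≠ 0 := fun hc => huv ((hconn.dist_eq_zero_iff).mp hc)
        rw [if_neg huv, if_neg (fun hc : u' = v' => this (by rw [h, hc, SimpleGraph.dist_self]))]
  | succ j ih =>
      intro u v u' v' h
      rw [pow_succ, SimpleGraph.mul_adjMatrix_apply, SimpleGraph.mul_adjMatrix_apply]
      have key : ∀ x y : V, (∑ w ∈ G.neighborFinset y, ((G.adjMatrix ℝ) ^ j) x w) =
          ∑ m ∈ Finset.range (d + 2), ∑ w ∈ FF G x y m, ((G.adjMatrix ℝ) ^ j) x w :=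
        fun x y => (Finset.sum_fiberwise_of_maps_to (g := fun w => G.dist x w)
          (fun w _ => Finset.mem_range.mpr
            (show G.dist x w < d + 2 by have := dist_le_d G hdiam hd x w; omega)) _).symm
      rw [key u v, key u' v']
      refine Finset.sum_congr rfl fun m _ => ?_
      have hcard : (FF G u v m).card = (FF G u' v' m).card :=
        card_FF_eq G hconn hdiam hd h3 h4 hk m h rfl
      rcases Finset.eq_empty_or_nonempty (FF G u v m) with he | ⟨w₀, hw₀⟩
      · have he' : FF G u' v' m = ∅ := Finset.card_eq_zero.mp (by rw [← hcard, he]; simp)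
        rw [he, he', Finset.sum_empty, Finset.sum_empty]
      · have hw₀d : G.dist u w₀ = m := ((mem_FF G).mp hw₀).2
        have c1 : ∑ w ∈ FF G u v m, ((G.adjMatrix ℝ) ^ j) u w =
            (FF G u v m).card • ((G.adjMatrix ℝ) ^ j) u w₀ := by
          rw [← Finset.sum_const]
          exact Finset.sum_congr rfl fun w hw =>
            ih u w u w₀ (by rw [((mem_FF G).mp hw).2, hw₀d])
        have c2 : ∑ w ∈ FF G u' v' m, ((G.adjMatrix ℝ) ^ j) u' w =
            (FF G u' v' m).card • ((G.adjMatrix ℝ) ^ j) u w₀ := by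
          rw [← Finset.sum_const]
          exact Finset.sum_congr rfl fun w hw =>
            ih u' w u w₀ (by rw [((mem_FF G).mp hw).2, hw₀d])
        rw [c1, c2, hcard]

include hconn hdiam hd h3 h4 hk in
lemma aeval_walk_regular (q : ℝ[X]) {u v u' v' : V} (h : G.dist u v = G.dist u' v') :
    (aeval (G.adjMatrix ℝ) q) u v = (aeval (G.adjMatrix ℝ) q) u' v' := by
  rw [Polynomial.aeval_eq_sum_range, Matrix.sum_apply, Matrix.sum_apply]
  refine Finset.sum_congr rfl fun j _ => ?_
  rw [Matrix.smul_apply, Matrix.smul_apply,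
    walk_regular G hconn hdiam hd h3 h4 hk j u v u' v' h]

end graph

/-- A finite connected simple graph `G` is *distance-regular* with diameter `d` and
intersection numbers `b i` and `c i`: for any two vertices `u`, `v` at distance `i ≤ d`,
the vertex `v` has exactly `b i` neighbours at distance `i + 1` from `u` and exactly
`c i` neighbours at distance `i - 1` from `u`.  (This forces the conventions
`c 0 = 0` and `b d = 0`.) -/
def IsDistRegular {V : Type*} [Fintype V] (G : SimpleGraph V) (d : ℕ) (b c : ℕ → ℕ) : Prop :=
  G.Connected ∧ G.diam = d ∧
    (∀ i ≤ d, ∀ u v : V, G.dist u v = i →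
      {w : V | G.Adj v w ∧ G.dist u w = i + 1}.ncard = b i) ∧
    (∀ i ≤ d, ∀ u v : V, G.dist u v = i →
      {w : V | G.Adj v w ∧ G.dist u w = i - 1}.ncard = c i)

/-- **Delsarte clique bound.**  In a distance-regular graph of diameter `d ≥ 2` with
valency `k` and smallest eigenvalue `θmin` (which is negative), every clique `C`
satisfies `|C| ≤ 1 + k / (-θmin)`. -/
theorem delsarte_clique_bound {V : Type*} [Fintype V] [DecidableEq V] (G : SimpleGraph V)
    [DecidableRel G.Adj] (d : ℕ) (b c : ℕ → ℕ) (k : ℕ) (hd : 2 ≤ d)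
    (hG : IsDistRegular G d b c) (hk : b 0 = k) (θmin : ℝ)
    (hθ : Module.End.HasEigenvalue (Matrix.toLin' (G.adjMatrix ℝ)) θmin)
    (hθmin : ∀ θ : ℝ, Module.End.HasEigenvalue (Matrix.toLin' (G.adjMatrix ℝ)) θ → θmin ≤ θ) :
    θmin < 0 ∧ ∀ C : Finset V, G.IsClique (C : Set V) → (C.card : ℝ) ≤ 1 + (k : ℝ) / (-θmin) := by
  classical
  obtain ⟨hconn, hdiam, h3, h4⟩ := hG
  set A := G.adjMatrix ℝ with hAdef
  have hA : A.IsHermitian := by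
    ext i j
    simp [Matrix.conjTranspose_apply, hAdef, SimpleGraph.adj_comm]
  -- an edge exists
  have hV : Nonempty V := hconn.nonempty
  obtain ⟨u₀, v₀, hadj⟩ : ∃ u v : V, G.Adj u v := by
    obtain ⟨ud, vd, hdist⟩ := G.exists_dist_eq_diam
    rw [hdiam] at hdist
    obtain ⟨pw, hpw⟩ := (hconn ud vd).exists_walk_length_eq_dist
    cases pw with
    | nil => rw [SimpleGraph.Walk.length_nil] at hpw; omega
    | cons h q => exact ⟨_, _, h⟩
  -- θmin is negative
  have hθneg : θmin < 0 := by
    by_contra hnn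
    push_neg at hnn
    have hpsd : A.PosSemidef := hA.posSemidef_iff_eigenvalues_nonneg.mpr
      (fun i => le_trans hnn (hθmin _ (hasEigenvalue_toLin'_eigenvalues hA i)))
    have h2 := hpsd.dotProduct_mulVec_nonneg (Pi.single u₀ 1 - Pi.single v₀ 1)
    have hval : dotProduct (star (Pi.single u₀ 1 - Pi.single v₀ 1))
        (A *ᵥ (Pi.single u₀ 1 - Pi.single v₀ 1)) = -2 := by
      simp [Matrix.mulVec_sub, Matrix.mulVec_single, sub_dotProduct,
        dotProduct_sub, single_dotProduct, hAdef,
        SimpleGraph.adjMatrix_apply, hadj, hadj.symm, G.irrefl]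
      norm_num
    rw [hval] at h2
    linarith
  -- spectral setup
  set Λ : Finset ℝ := Finset.image hA.eigenvalues Finset.univ with hΛ
  obtain ⟨xv, hxv⟩ := hθ.exists_hasEigenvector
  have hx0 : xv ≠ 0 := hxv.right
  have hxA : A *ᵥ xv = θmin • xv := by
    rw [← Matrix.toLin'_apply]; exact hxv.apply_eq_smul
  have hθΛ : θmin ∈ Λ := by
    have h0 : aeval A (∏ l ∈ Λ, (X - C l)) = 0 :=
      annihilate_of_eval_eigenvalues_zero hA _ (fun i => by
        rw [eval_prod]
        exact Finset.prod_eq_zero (Finset.mem_image_of_mem _ (Finset.mem_univ i)) (by simp))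
    have hz := aeval_mulVec_eig A hxA (∏ l ∈ Λ, (X - C l))
    rw [h0, Matrix.zero_mulVec] at hz
    have heval : eval θmin (∏ l ∈ Λ, (X - C l)) = 0 := by
      by_contra hne
      exact hx0 (by rcases smul_eq_zero.mp hz.symm with h | h; exact absurd h hne; exact h)
    rw [eval_prod] at heval
    obtain ⟨l, hl, he⟩ := Finset.prod_eq_zero_iff.mp heval
    simp only [eval_sub, eval_X, eval_C, sub_eq_zero] at he
    exact he ▸ hl
  set p : ℝ[X] := ∏ l ∈ Λ.erase θmin, (X - C l) with hp
  have hpθ : p.eval θmin ≠ 0 := by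
    rw [hp, eval_prod]
    apply Finset.prod_ne_zero_iff.mpr
    intro l hl
    simp only [eval_sub, eval_X, eval_C]
    exact sub_ne_zero.mpr (Ne.symm (Finset.ne_of_mem_erase hl))
  set E' := aeval A p with hE'
  have hE'H : E'ᴴ = E' := by
    rw [hE', Polynomial.aeval_eq_sum_range]
    simp only [Matrix.conjTranspose_sum, Matrix.conjTranspose_smul, Matrix.conjTranspose_pow,
      hA.eq, star_trivial]
  set E := E'ᴴ * E' with hEdef
  have hPSD : E.PosSemidef := Matrix.posSemidef_conjTranspose_mul_self E'
  have hEpoly : E = aeval A (p * p) := by rw [hEdef, hE'H, hE', ← _root_.map_mul]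
  have wr : ∀ u v u' v' : V, G.dist u v = G.dist u' v' → E u v = E u' v' := by
    intro u v u' v' h
    rw [hEpoly]
    exact aeval_walk_regular G hconn hdiam hd h3 h4 hk _ h
  set e₀ := E u₀ u₀ with he₀def
  set e₁ := E u₀ v₀ with he₁def
  have hdiag : ∀ u, E u u = e₀ := fun u => wr u u u₀ u₀ (by rw [SimpleGraph.dist_self, SimpleGraph.dist_self])
  have hadj1 : G.dist u₀ v₀ = 1 := SimpleGraph.dist_eq_one_iff_adj.mpr hadj
  have hedge : ∀ u v, G.Adj u v → E u v = e₁ := fun u v h =>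
    wr u v u₀ v₀ (by rw [SimpleGraph.dist_eq_one_iff_adj.mpr h, hadj1])
  have hE'ne : E' ≠ 0 := by
    intro h0
    have hz := aeval_mulVec_eig A hxA p
    rw [← hE', h0, Matrix.zero_mulVec] at hz
    exact hx0 (by rcases smul_eq_zero.mp hz.symm with h | h; exact absurd h hpθ; exact h)
  have he₀pos : 0 < e₀ := by
    obtain ⟨a, b', hab⟩ : ∃ a b', E' a b' ≠ 0 := by
      by_contra hno; push_neg at hno; exact hE'ne (by ext a b'; simpa using hno a b')
    have hsum : ∑ u, E u u = ∑ u, ∑ w, (E' w u) ^ 2 := by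
      refine Finset.sum_congr rfl fun u _ => ?_
      rw [hEdef, Matrix.mul_apply]
      refine Finset.sum_congr rfl fun w _ => ?_
      rw [Matrix.conjTranspose_apply, star_trivial, sq]
    have hpos : 0 < ∑ u, ∑ w, (E' w u) ^ 2 := by
      apply Finset.sum_pos' (fun u _ => Finset.sum_nonneg fun w _ => sq_nonneg _)
      exact ⟨b', Finset.mem_univ _,
        Finset.sum_pos' (fun w _ => sq_nonneg _)
          ⟨a, Finset.mem_univ _, by positivity⟩⟩
    have hconst : ∑ u, E u u = (Fintype.card V : ℝ) * e₀ := by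
      rw [Finset.sum_congr rfl (fun u _ => hdiag u), Finset.sum_const, nsmul_eq_mul,
        Finset.card_univ]
    rw [hconst] at hsum
    have hcard : 0 < (Fintype.card V : ℝ) := by
      exact_mod_cast Fintype.card_pos
    nlinarith [hsum ▸ hpos]
  have hdeg : ∀ v : V, G.degree v = k := deg_eq G hconn h3 hk
  have hkpos : 0 < k := by
    have h1 : 0 < G.degree u₀ := G.degree_pos_iff_exists_adj u₀ |>.mpr ⟨v₀, hadj⟩
    rw [hdeg u₀] at h1; exact h1
  have hann : aeval A ((X - C θmin) * (p * p)) = 0 := by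
    apply annihilate_of_eval_eigenvalues_zero hA
    intro i
    rw [eval_mul, eval_mul]
    by_cases hi : hA.eigenvalues i = θmin
    · rw [hi]; simp
    · have hz : p.eval (hA.eigenvalues i) = 0 := by
        rw [hp, eval_prod]
        exact Finset.prod_eq_zero
          (Finset.mem_erase.mpr ⟨hi, Finset.mem_image_of_mem _ (Finset.mem_univ i)⟩) (by simp)
      rw [hz]; ring
  have hAE : A * E = θmin • E := by
    have hsplit : (A - θmin • 1) * E = 0 := by
      rw [_root_.map_mul, map_sub, aeval_X, aeval_C, Algebra.algebraMap_eq_smul_one, ← hEpoly] at hann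
      exact hann
    rw [sub_mul, smul_mul_assoc, one_mul, sub_eq_zero] at hsplit
    exact hsplit
  have hke : (k : ℝ) * e₁ = θmin * e₀ := by
    have h1 := congrFun (congrFun hAE u₀) u₀
    have hlhs : (A * E) u₀ u₀ = (k : ℝ) * e₁ := by
      rw [hAdef, SimpleGraph.adjMatrix_mul_apply]
      rw [Finset.sum_congr rfl (fun w hw => hedge w u₀
        ((SimpleGraph.mem_neighborFinset G u₀ w).mp hw).symm)]
      rw [Finset.sum_const, nsmul_eq_mul, SimpleGraph.card_neighborFinset_eq_degree, hdeg u₀]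
    have hrhs : (θmin • E) u₀ u₀ = θmin * e₀ := by rw [Matrix.smul_apply, smul_eq_mul]
    rw [hlhs, hrhs] at h1
    exact h1
  refine ⟨hθneg, fun C hC => ?_⟩
  by_cases hsmall : C.card ≤ 1
  · have hnn : (0:ℝ) ≤ (k : ℝ) / (-θmin) := div_nonneg (Nat.cast_nonneg k) (by linarith)
    have hle : (C.card : ℝ) ≤ 1 := by exact_mod_cast hsmall
    linarith
  · push_neg at hsmall
    set y : V → ℝ := fun v => if v ∈ C then 1 else 0 with hy
    have hquad := hPSD.dotProduct_mulVec_nonneg y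
    have hyc : dotProduct (star y) (E *ᵥ y) = ∑ u ∈ C, ∑ v ∈ C, E u v := by
      simp only [star_trivial, dotProduct, Matrix.mulVec, hy, mul_ite, ite_mul,
        mul_one, mul_zero, one_mul, zero_mul, Finset.sum_ite_mem, Finset.univ_inter]
    have hinner : ∀ u ∈ C, ∑ v ∈ C, E u v = e₀ + ((C.card : ℝ) - 1) * e₁ := by
      intro u hu
      rw [← Finset.add_sum_erase C _ hu, hdiag u]
      congr 1
      have hoff : ∀ v ∈ C.erase u, E u v = e₁ := fun v hv =>
        hedge u v (hC hu (Finset.mem_of_mem_erase hv) (Ne.symm (Finset.ne_of_mem_erase hv)))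
      rw [Finset.sum_congr rfl hoff, Finset.sum_const, nsmul_eq_mul,
        Finset.card_erase_of_mem hu]
      congr 1
      have : 1 ≤ C.card := by omega
      push_cast [this]
      ring
    have htot : dotProduct (star y) (E *ᵥ y) =
        (C.card : ℝ) * (e₀ + ((C.card : ℝ) - 1) * e₁) := by
      rw [hyc, Finset.sum_congr rfl hinner, Finset.sum_const, nsmul_eq_mul]
    rw [htot] at hquad
    have hcc : (2 : ℝ) ≤ (C.card : ℝ) := by exact_mod_cast hsmall
    have hkR : (0 : ℝ) < (k : ℝ) := by exact_mod_cast hkpos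
    have h5 : 0 ≤ e₀ + ((C.card : ℝ) - 1) * e₁ := by nlinarith
    have h6 : 0 ≤ (k : ℝ) + ((C.card : ℝ) - 1) * θmin := by nlinarith
    have h7 : ((C.card : ℝ) - 1) * (-θmin) ≤ (k : ℝ) := by nlinarith
    have h8 : (C.card : ℝ) - 1 ≤ (k : ℝ) / (-θmin) := by
      rw [le_div_iff₀ (by linarith : (0:ℝ) < -θmin)]
      linarith
    linarith
end

section
/- (Hoffman's ratio bound.) Let Γ be a connected k-regular simple graph on n vertices that is not complete, and let θ_min denote the smallest eigenvalue of its adjacency matrix (so θ_min < 0). Then every independent set S of Γ satisfies |S| ≤ n·(−θ_min)/(k − θ_min). -/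
open SimpleGraph

section HoffmanAux

open Matrix Finset

variable {V : Type*} [Fintype V] [DecidableEq V]

private lemma hoffman_hasEigenvalue_toLin'_iff (M : Matrix V V ℝ) (μ : ℝ) :
    Module.End.HasEigenvalue (Matrix.toLin' M) μ ↔ μ ∈ spectrum ℝ M := by
  rw [Module.End.hasEigenvalue_iff_mem_spectrum,
    ← AlgEquiv.spectrum_eq (Matrix.toLinAlgEquiv' (R := ℝ) (n := V)) M]
  rfl

private lemma hoffman_quad_bound (A : Matrix V V ℝ) (hA : A.IsHermitian) (θmin : ℝ)
    (hθmin : ∀ θ : ℝ, Module.End.HasEigenvalue (Matrix.toLin' A) θ → θmin ≤ θ)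
    (x : V → ℝ) : θmin * (x ⬝ᵥ x) ≤ x ⬝ᵥ (A *ᵥ x) := by
  set B := A - θmin • 1 with hBdef
  have hB : B.IsHermitian := by
    unfold B
    apply hA.sub
    simp [Matrix.IsHermitian, conjTranspose_smul]
  have hpsd : B.PosSemidef := by
    refine hB.posSemidef_iff_eigenvalues_nonneg.mpr fun i => ?_
    set μ := hB.eigenvalues i with hμ
    have hspec : μ ∈ spectrum ℝ B := hB.eigenvalues_mem_spectrum_real i
    have hev : Module.End.HasEigenvalue (Matrix.toLin' B) μ :=
      (hoffman_hasEigenvalue_toLin'_iff B μ).2 hspec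
    obtain ⟨v, hv⟩ := hev.exists_hasEigenvector
    have hBv : B *ᵥ v = μ • v := by
      have := hv.apply_eq_smul
      rwa [Matrix.toLin'_apply] at this
    have hAv : A *ᵥ v = (μ + θmin) • v := by
      have h1 : (A - θmin • 1) *ᵥ v = A *ᵥ v - θmin • v := by
        rw [Matrix.sub_mulVec, Matrix.smul_mulVec, Matrix.one_mulVec]
      rw [hBdef, h1] at hBv
      rw [add_smul, ← hBv]
      abel
    have : Module.End.HasEigenvalue (Matrix.toLin' A) (μ + θmin) := by
      apply Module.End.hasEigenvalue_of_hasEigenvector (x := v)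
      refine ⟨Module.End.mem_eigenspace_iff.2 ?_, hv.2⟩
      rwa [Matrix.toLin'_apply]
    have := hθmin _ this
    change (0:ℝ) ≤ μ
    linarith
  have h0 := hpsd.dotProduct_mulVec_nonneg x
  rw [star_trivial] at h0
  have hBx : x ⬝ᵥ (B *ᵥ x) = x ⬝ᵥ (A *ᵥ x) - θmin * (x ⬝ᵥ x) := by
    rw [hBdef, Matrix.sub_mulVec, dotProduct_sub, Matrix.smul_mulVec,
      Matrix.one_mulVec, dotProduct_smul, smul_eq_mul]
  linarith [h0, hBx.symm ▸ h0]

private lemma hoffman_key_sums (G : SimpleGraph V) [DecidableRel G.Adj] (k : ℕ)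
    (hreg : G.IsRegularOfDegree k) (S : Finset V)
    (hS : ∀ u ∈ S, ∀ v ∈ S, ¬ G.Adj u v) :
    (fun v => (Fintype.card V : ℝ) * (if v ∈ S then 1 else 0) - S.card) ⬝ᵥ
      ((G.adjMatrix ℝ) *ᵥ (fun v => (Fintype.card V : ℝ) * (if v ∈ S then 1 else 0) - S.card))
      = -((Fintype.card V : ℝ) * k * S.card ^ 2) := by
  set n : ℝ := (Fintype.card V : ℝ)
  set s : ℝ := (S.card : ℝ)
  have hsum_ind : ∑ v : V, (if v ∈ S then (1:ℝ) else 0) = s := by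
    simp [Finset.sum_boole, Finset.filter_mem_eq_inter, s]
  have hAx : ∀ v, ((G.adjMatrix ℝ) *ᵥ (fun v => n * (if v ∈ S then 1 else 0) - s)) v
      = n * ((G.neighborFinset v ∩ S).card : ℝ) - k * s := by
    intro v
    rw [adjMatrix_mulVec_apply, Finset.sum_sub_distrib, ← Finset.mul_sum, Finset.sum_const,
      card_neighborFinset_eq_degree, hreg v]
    have : ∑ u ∈ G.neighborFinset v, (if u ∈ S then (1:ℝ) else 0)
        = ((G.neighborFinset v ∩ S).card : ℝ) := by
      simp [Finset.sum_boole, Finset.filter_mem_eq_inter]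
    rw [this]; ring
  have hNzero : ∀ v ∈ S, (G.neighborFinset v ∩ S) = ∅ := by
    intro v hv
    ext u
    simp only [Finset.mem_inter, mem_neighborFinset, Finset.notMem_empty, iff_false, not_and]
    exact fun h hu => hS v hv u hu h
  have hNsum : ∑ v : V, ((G.neighborFinset v ∩ S).card : ℝ) = k * s := by
    have h1 : ∀ v : V, ((G.neighborFinset v ∩ S).card : ℝ)
        = ∑ u ∈ S, (if G.Adj v u then (1:ℝ) else 0) := by
      intro v
      rw [Finset.inter_comm, ← Finset.filter_mem_eq_inter, ← Finset.sum_boole]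
      simp [mem_neighborFinset]
    simp only [h1]
    rw [Finset.sum_comm]
    have h2 : ∀ u : V, ∑ v : V, (if G.Adj v u then (1:ℝ) else 0) = (k : ℝ) := by
      intro u
      rw [Finset.sum_boole]
      have : (Finset.univ.filter fun v => G.Adj v u) = G.neighborFinset u := by
        ext v; simp [mem_neighborFinset, adj_comm]
      rw [this, card_neighborFinset_eq_degree, hreg u]
    simp only [h2, Finset.sum_const, nsmul_eq_mul]
    ring
  have hχN : ∑ v : V, (if v ∈ S then (1:ℝ) else 0) * ((G.neighborFinset v ∩ S).card : ℝ) = 0 := by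
    apply Finset.sum_eq_zero
    intro v _
    by_cases hv : v ∈ S
    · simp [hv, hNzero v hv]
    · simp [hv]
  rw [dotProduct]
  have hterm : ∀ v : V, (n * (if v ∈ S then (1:ℝ) else 0) - s) *
      (((G.adjMatrix ℝ) *ᵥ (fun v => n * (if v ∈ S then 1 else 0) - s)) v)
      = n^2 * ((if v ∈ S then (1:ℝ) else 0) * ((G.neighborFinset v ∩ S).card : ℝ))
        - n * (k:ℝ) * s * (if v ∈ S then (1:ℝ) else 0)
        - n * s * ((G.neighborFinset v ∩ S).card : ℝ) + (k:ℝ) * s^2 := by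
    intro v; rw [hAx v]; ring
  calc ∑ v : V, (n * (if v ∈ S then (1:ℝ) else 0) - s) *
        (((G.adjMatrix ℝ) *ᵥ (fun v => n * (if v ∈ S then 1 else 0) - s)) v)
      = ∑ v : V, (n^2 * ((if v ∈ S then (1:ℝ) else 0) * ((G.neighborFinset v ∩ S).card : ℝ))
        - n * (k:ℝ) * s * (if v ∈ S then (1:ℝ) else 0)
        - n * s * ((G.neighborFinset v ∩ S).card : ℝ) + (k:ℝ) * s^2) := by
        exact Finset.sum_congr rfl fun v _ => hterm v
    _ = -(n * k * s^2) := by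
        simp only [Finset.sum_add_distrib, Finset.sum_sub_distrib, ← Finset.mul_sum,
          hχN, hNsum, hsum_ind, Finset.sum_const, nsmul_eq_mul]
        have : (Finset.univ : Finset V).card = Fintype.card V := rfl
        rw [this]; ring

private lemma hoffman_norm_sq_calc (S : Finset V) :
    (fun v => (Fintype.card V : ℝ) * (if v ∈ S then 1 else 0) - S.card) ⬝ᵥ
      (fun v => (Fintype.card V : ℝ) * (if v ∈ S then 1 else 0) - S.card)
      = (Fintype.card V : ℝ) * S.card * ((Fintype.card V : ℝ) - S.card) := by
  set n : ℝ := (Fintype.card V : ℝ)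
  set s : ℝ := (S.card : ℝ)
  have hsum_ind : ∑ v : V, (if v ∈ S then (1:ℝ) else 0) = s := by
    simp [Finset.sum_boole, Finset.filter_mem_eq_inter, s]
  rw [dotProduct]
  have hterm : ∀ v : V, (n * (if v ∈ S then (1:ℝ) else 0) - s) *
      (n * (if v ∈ S then (1:ℝ) else 0) - s)
      = (n^2 - 2*n*s) * (if v ∈ S then (1:ℝ) else 0) + s^2 := by
    intro v; by_cases hv : v ∈ S <;> simp [hv] <;> ring
  calc ∑ v : V, (n * (if v ∈ S then (1:ℝ) else 0) - s) *
        (n * (if v ∈ S then (1:ℝ) else 0) - s)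
      = ∑ v : V, ((n^2 - 2*n*s) * (if v ∈ S then (1:ℝ) else 0) + s^2) :=
        Finset.sum_congr rfl fun v _ => hterm v
    _ = n * s * (n - s) := by
        simp only [Finset.sum_add_distrib, ← Finset.mul_sum, hsum_ind, Finset.sum_const,
          nsmul_eq_mul]
        have : (Finset.univ : Finset V).card = Fintype.card V := rfl
        rw [this]; ring

end HoffmanAux

/-- **Hoffman's ratio bound.**  Let `G` be a connected `k`-regular graph on `n` vertices
that is not complete, and let `θmin` be the smallest eigenvalue of its adjacency matrix
(which is negative).  Then every independent set `S` satisfies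
`|S| ≤ n * (-θmin) / (k - θmin)`. -/
theorem hoffman_ratio_bound {V : Type*} [Fintype V] [DecidableEq V] (G : SimpleGraph V)
    [DecidableRel G.Adj] (k : ℕ) (hconn : G.Connected) (hreg : G.IsRegularOfDegree k)
    (hnotcomplete : G ≠ ⊤) (θmin : ℝ)
    (hθ : Module.End.HasEigenvalue (Matrix.toLin' (G.adjMatrix ℝ)) θmin)
    (hθmin : ∀ θ : ℝ, Module.End.HasEigenvalue (Matrix.toLin' (G.adjMatrix ℝ)) θ → θmin ≤ θ) :
    θmin < 0 ∧ ∀ S : Finset V, (∀ u ∈ S, ∀ v ∈ S, ¬ G.Adj u v) →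
      (S.card : ℝ) ≤ (Fintype.card V : ℝ) * (-θmin) / ((k : ℝ) - θmin) := by
  classical
  have hne : Nonempty V := hconn.nonempty
  -- V is nontrivial, else G = ⊤
  have hnontriv : Nontrivial V := by
    by_contra h
    rw [not_nontrivial_iff_subsingleton] at h
    apply hnotcomplete
    ext u v
    have huv : u = v := Subsingleton.elim u v
    subst huv
    simp
  have hn2 : 2 ≤ Fintype.card V := Fintype.one_lt_card
  -- k ≥ 1
  have hk1 : 1 ≤ k := by
    by_contra h
    push_neg at h
    interval_cases k
    obtain ⟨u, v, huv⟩ := hnontriv.exists_pair_ne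
    obtain ⟨w⟩ := hconn u v
    have hex : ∃ a b, G.Adj a b := by
      cases w with
      | nil => exact absurd rfl huv
      | cons h' p => exact ⟨_, _, h'⟩
    obtain ⟨a, b, hab⟩ := hex
    have hb : b ∈ G.neighborFinset a := by
      rw [SimpleGraph.mem_neighborFinset]; exact hab
    have : G.degree a = 0 := hreg a
    rw [← SimpleGraph.card_neighborFinset_eq_degree, Finset.card_eq_zero] at this
    rw [this] at hb
    exact absurd hb (Finset.notMem_empty b)
  have hA : (G.adjMatrix ℝ).IsHermitian := by
    rw [Matrix.IsHermitian, Matrix.conjTranspose_eq_transpose_of_trivial]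
    exact (SimpleGraph.isSymm_adjMatrix G)
  set n : ℝ := (Fintype.card V : ℝ) with hn
  have hnpos : (0:ℝ) < n := by
    rw [hn]; exact_mod_cast Nat.lt_of_lt_of_le Nat.zero_lt_two hn2
  -- the main quadratic inequality, for any independent set
  have main : ∀ S : Finset V, (∀ u ∈ S, ∀ v ∈ S, ¬ G.Adj u v) →
      θmin * ((S.card : ℝ) * (n - S.card)) ≤ -((k:ℝ) * (S.card : ℝ)^2) := by
    intro S hS
    have hq := hoffman_quad_bound (G.adjMatrix ℝ) hA θmin hθmin
      (fun v => n * (if v ∈ S then 1 else 0) - S.card)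
    rw [hoffman_key_sums G k hreg S hS, hoffman_norm_sq_calc S] at hq
    -- hq : θmin * (n * s * (n - s)) ≤ -(n * k * s^2)
    have h1 : n * (θmin * ((S.card : ℝ) * (n - S.card))) ≤ n * (-((k:ℝ) * (S.card : ℝ)^2)) := by
      calc n * (θmin * ((S.card : ℝ) * (n - S.card)))
          = θmin * (n * (S.card : ℝ) * (n - S.card)) := by ring
        _ ≤ -(n * (k:ℝ) * (S.card : ℝ)^2) := hq
        _ = n * (-((k:ℝ) * (S.card : ℝ)^2)) := by ring
    exact le_of_mul_le_mul_left h1 hnpos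
  -- θmin < 0, using a singleton independent set
  have hθneg : θmin < 0 := by
    obtain ⟨u⟩ := hne
    have hind : ∀ a ∈ ({u} : Finset V), ∀ b ∈ ({u} : Finset V), ¬ G.Adj a b := by
      intro a ha b hb
      rw [Finset.mem_singleton] at ha hb
      subst ha; subst hb
      exact G.irrefl
    have h := main {u} hind
    simp only [Finset.card_singleton, Nat.cast_one, one_pow, mul_one] at h
    -- h : θmin * (1 * (n - 1)) ≤ -(k * 1)  roughly
    have hk1' : (1:ℝ) ≤ (k:ℝ) := by exact_mod_cast hk1
    have hn2' : (2:ℝ) ≤ n := by rw [hn]; exact_mod_cast hn2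
    nlinarith [h, hk1', hn2']
  have hkθ : (0:ℝ) < (k:ℝ) - θmin := by
    have : (0:ℝ) ≤ (k:ℝ) := Nat.cast_nonneg k
    linarith
  refine ⟨hθneg, fun S hS => ?_⟩
  set s : ℝ := (S.card : ℝ) with hs
  have hs0 : (0:ℝ) ≤ s := by rw [hs]; exact Nat.cast_nonneg _
  rcases eq_or_lt_of_le hs0 with h0 | hspos
  · rw [← h0]
    exact div_nonneg (mul_nonneg hnpos.le (by linarith)) hkθ.le
  · have h := main S hS
    rw [le_div_iff₀ hkθ]
    -- goal : s * (k - θmin) ≤ n * (-θmin)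
    -- h : θmin * (s * (n - s)) ≤ -(k * s^2)
    have h4 : s * (s * ((k:ℝ) - θmin) - n * (-θmin)) ≤ 0 := by nlinarith [h]
    by_contra hcon
    push_neg at hcon
    nlinarith [mul_pos hspos (sub_pos.mpr hcon)]
end

section
/- (Moore graphs of diameter 2.) Let Γ be a distance-regular graph of diameter 2 and girth 5 with valency k. Then k ∈ {2, 3, 7, 57}. -/
open SimpleGraph

section MooreAux

open scoped Matrix

variable {V : Type*} [Fintype V] [DecidableEq V] {G : SimpleGraph V} [DecidableRel G.Adj]

private lemma moore_aux_count (k : ℕ) (hk2 : 2 ≤ k)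
    (hdeg : ∀ v : V, G.degree v = k)
    (hdist2 : ∀ u v : V, G.dist u v ≤ 2)
    (hconn : G.Connected)
    (htri : ∀ {x y z : V}, G.Adj x y → G.Adj y z → G.Adj z x → False)
    (hcn : ∀ u v : V, u ≠ v → ¬ G.Adj u v → ∃! w, G.Adj u w ∧ G.Adj w v) :
    Fintype.card V = k^2 + 1 := by
  classical
  obtain ⟨u⟩ := hconn.nonempty
  set S1 : Finset V := G.neighborFinset u with hS1
  set S2 : Finset V := Finset.univ.filter (fun w => G.dist u w = 2) with hS2
  have hdu : ∀ w : V, G.dist u w = 0 ∨ G.dist u w = 1 ∨ G.dist u w = 2 := by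
    intro w; have := hdist2 u w; omega
  have hd0 : ∀ w : V, G.dist u w = 0 ↔ w = u := by
    intro w
    rw [(hconn u w).dist_eq_zero_iff]
    exact eq_comm
  have hcover : Finset.univ = insert u (S1 ∪ S2) := by
    ext w
    simp only [Finset.mem_univ, true_iff, Finset.mem_insert, Finset.mem_union, hS1, hS2,
      Finset.mem_filter, SimpleGraph.mem_neighborFinset]
    rcases hdu w with h | h | h
    · left; exact (hd0 w).mp h
    · right; left; exact (SimpleGraph.dist_eq_one_iff_adj.mp h)
    · right; right; exact ⟨trivial, h⟩
  have hu1 : u ∉ S1 := by simp [hS1]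
  have hu2 : u ∉ S2 := by simp [hS2, SimpleGraph.dist_self]
  have h12 : Disjoint S1 S2 := by
    rw [Finset.disjoint_left]
    intro w hw1 hw2
    simp [hS1] at hw1
    simp [hS2] at hw2
    rw [← SimpleGraph.dist_eq_one_iff_adj] at hw1
    omega
  have hfiber : ∀ v ∈ S1, (S2.filter (fun w => G.Adj v w)).card = k - 1 := by
    intro v hv
    rw [SimpleGraph.mem_neighborFinset] at hv
    have : S2.filter (fun w => G.Adj v w) = (G.neighborFinset v).erase u := by
      ext w
      simp only [Finset.mem_filter, hS2, Finset.mem_univ, true_and, Finset.mem_erase,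
        SimpleGraph.mem_neighborFinset]
      constructor
      · rintro ⟨hdw, haw⟩
        refine ⟨?_, haw⟩
        rintro rfl
        simp [SimpleGraph.dist_self] at hdw
      · rintro ⟨hwu, haw⟩
        refine ⟨?_, haw⟩
        rcases hdu w with h | h | h
        · exact absurd ((hd0 w).mp h) hwu
        · rw [SimpleGraph.dist_eq_one_iff_adj] at h
          exact absurd (htri hv haw (G.adj_symm h)) not_false
        · exact h
    rw [this, Finset.card_erase_of_mem (by simp [SimpleGraph.mem_neighborFinset, G.adj_symm hv]),
      SimpleGraph.card_neighborFinset_eq_degree, hdeg v]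
  have hS2card : S2.card = k * (k - 1) := by
    have hbi : S2 = S1.biUnion (fun v => S2.filter (fun w => G.Adj v w)) := by
      ext w
      simp only [Finset.mem_biUnion, Finset.mem_filter]
      constructor
      · intro hw
        have hw' := hw
        simp only [hS2, Finset.mem_filter, Finset.mem_univ, true_and] at hw'
        have hwu : u ≠ w := by
          intro h; rw [← h] at hw'; simp [SimpleGraph.dist_self] at hw'
        have hnadj : ¬ G.Adj u w := by
          intro h; rw [← SimpleGraph.dist_eq_one_iff_adj] at h; omega
        obtain ⟨v, ⟨hv1, hv2⟩, -⟩ := hcn u w hwu hnadj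
        exact ⟨v, by simp [hS1, SimpleGraph.mem_neighborFinset, hv1], hw, hv2⟩
      · rintro ⟨v, -, hw, -⟩
        exact hw
    rw [hbi, Finset.card_biUnion, Finset.sum_congr rfl hfiber]
    · rw [Finset.sum_const, smul_eq_mul, hS1, SimpleGraph.card_neighborFinset_eq_degree,
        hdeg u, mul_comm]
    · intro v1 h1 v2 h2 hne
      rw [Function.onFun, Finset.disjoint_left]
      intro w hw1 hw2
      simp only [Finset.mem_filter] at hw1 hw2
      have hw' := hw1.1
      simp only [hS2, Finset.mem_filter, Finset.mem_univ, true_and] at hw'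
      have hwu : u ≠ w := by
        intro h; rw [← h] at hw'; simp [SimpleGraph.dist_self] at hw'
      have hnadj : ¬ G.Adj u w := by
        intro h; rw [← SimpleGraph.dist_eq_one_iff_adj] at h; omega
      obtain ⟨x0, -, huniq⟩ := hcn u w hwu hnadj
      rw [Finset.mem_coe, SimpleGraph.mem_neighborFinset] at h1 h2
      exact hne ((huniq v1 ⟨h1, hw1.2⟩).trans (huniq v2 ⟨h2, hw2.2⟩).symm)
  have hfin : Fintype.card V = 1 + (k + k * (k-1)) := by
    rw [← Finset.card_univ, hcover, Finset.card_insert_of_notMem (by simp [hu1, hu2]),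
      Finset.card_union_of_disjoint h12, hS2card]
    rw [hS1, SimpleGraph.card_neighborFinset_eq_degree, hdeg u]
    omega
  rw [hfin]
  obtain ⟨m, rfl⟩ : ∃ m, k = m + 2 := ⟨k - 2, by omega⟩
  rw [show m + 2 - 1 = m + 1 from rfl]
  ring

private lemma moore_aux_matrix (k : ℕ)
    (hdeg : ∀ v : V, G.degree v = k)
    (htri : ∀ {x y z : V}, G.Adj x y → G.Adj y z → G.Adj z x → False)
    (hcn : ∀ u v : V, u ≠ v → ¬ G.Adj u v → ∃! w, G.Adj u w ∧ G.Adj w v) :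
    ∃ A : Matrix V V ℝ, A.IsHermitian ∧
      A*(A*A) + A*A = ((2*(k:ℝ)-1)) • A + (k:ℝ) • (A*A)
        + (-((k:ℝ)*((k:ℝ)-1))) • (1 : Matrix V V ℝ) ∧
      A.trace = 0 ∧ (A*A).trace = (Fintype.card V : ℝ) * k := by
  classical
  set A : Matrix V V ℝ := Matrix.of (fun u v => if G.Adj u v then 1 else 0) with hAdef
  have hAsym : A.IsHermitian := by
    ext i j
    simp [hAdef, Matrix.conjTranspose_apply, G.adj_comm]
  have hA2 : ∀ u v : V, (A*A) u v
      = ((Finset.univ.filter (fun w => G.Adj u w ∧ G.Adj w v)).card : ℝ) := by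
    intro u v
    rw [Matrix.mul_apply, Finset.card_filter]
    push_cast
    apply Finset.sum_congr rfl
    intro w _
    by_cases h1 : G.Adj u w <;> by_cases h2 : G.Adj w v <;> simp [hAdef, h1, h2]
  have hdiag : ∀ u : V, (A*A) u u = (k : ℝ) := by
    intro u
    rw [hA2]
    have : Finset.univ.filter (fun w => G.Adj u w ∧ G.Adj w u) = G.neighborFinset u := by
      ext w; simp [SimpleGraph.mem_neighborFinset, G.adj_comm]
    rw [this, SimpleGraph.card_neighborFinset_eq_degree, hdeg u]
  have hadj : ∀ u v : V, G.Adj u v → (A*A) u v = 0 := by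
    intro u v h
    rw [hA2]
    have : Finset.univ.filter (fun w => G.Adj u w ∧ G.Adj w v) = ∅ := by
      ext w
      simp only [Finset.mem_filter, Finset.mem_univ, true_and, Finset.notMem_empty, iff_false]
      rintro ⟨h1, h2⟩
      exact htri h1 h2 (G.adj_symm h)
    rw [this]
    simp
  have hnadj : ∀ u v : V, u ≠ v → ¬ G.Adj u v → (A*A) u v = 1 := by
    intro u v hne h
    rw [hA2]
    obtain ⟨w0, hw0, huniq⟩ := hcn u v hne h
    have : Finset.univ.filter (fun w => G.Adj u w ∧ G.Adj w v) = {w0} := by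
      ext w
      simp only [Finset.mem_filter, Finset.mem_univ, true_and, Finset.mem_singleton]
      exact ⟨fun hw => huniq w hw, fun hw => hw ▸ hw0⟩
    rw [this]
    simp
  set J : Matrix V V ℝ := Matrix.of (fun _ _ => (1:ℝ)) with hJdef
  have hJid : A*A + A = ((k:ℝ)-1) • (1 : Matrix V V ℝ) + J := by
    ext i j
    simp only [Matrix.add_apply, Matrix.smul_apply, Matrix.one_apply, hJdef, Matrix.of_apply,
      smul_eq_mul]
    by_cases hij : i = j
    · subst hij
      rw [hdiag i]
      simp [hAdef, G.irrefl]
    · by_cases hadj' : G.Adj i j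
      · rw [hadj i j hadj']
        simp [hAdef, hadj', hij]
      · rw [hnadj i j hij hadj']
        simp [hAdef, hadj', hij]
  have hAJ : A * J = (k:ℝ) • J := by
    ext i j
    rw [Matrix.mul_apply]
    simp only [hJdef, Matrix.of_apply, Matrix.smul_apply, smul_eq_mul, mul_one, hAdef]
    rw [Finset.sum_boole]
    have : Finset.univ.filter (fun w => G.Adj i w) = G.neighborFinset i := by
      ext w; simp [SimpleGraph.mem_neighborFinset]
    rw [this, SimpleGraph.card_neighborFinset_eq_degree, hdeg i]
  have hJ' : J = A*A + A - ((k:ℝ)-1) • (1 : Matrix V V ℝ) := by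
    rw [hJid]; abel
  have hkey : A*(A*A) + A*A = ((2*(k:ℝ)-1)) • A + (k:ℝ) • (A*A)
      + (-((k:ℝ)*((k:ℝ)-1))) • (1 : Matrix V V ℝ) := by
    have h1 : A * (A*A + A) = A * (((k:ℝ)-1) • (1 : Matrix V V ℝ) + J) := by rw [hJid]
    rw [mul_add, mul_add, mul_smul_comm, mul_one, hAJ, hJ'] at h1
    rw [h1]
    rw [smul_sub, smul_add, smul_smul]
    module
  refine ⟨A, hAsym, hkey, ?_, ?_⟩
  · rw [Matrix.trace]
    simp [Matrix.diag, hAdef, G.irrefl]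
  · rw [Matrix.trace]
    have : ∀ i : V, (A*A).diag i = (k:ℝ) := fun i => hdiag i
    rw [Finset.sum_congr rfl (fun i _ => this i)]
    simp [mul_comm]

private lemma moore_aux_traces (A : Matrix V V ℝ) (hA : A.IsHermitian) :
    A.trace = ∑ i, hA.eigenvalues i ∧ (A*A).trace = ∑ i, (hA.eigenvalues i)^2 := by
  set U : Matrix V V ℝ := (hA.eigenvectorUnitary : Matrix V V ℝ) with hUdef
  set D : Matrix V V ℝ := Matrix.diagonal (RCLike.ofReal ∘ hA.eigenvalues) with hDdef
  have hU1 : star U * U = 1 := by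
    rw [hUdef]
    exact Unitary.coe_star_mul_self hA.eigenvectorUnitary
  have hst : A = U * D * star U := by rw [hA.spectral_theorem, Unitary.conjStarAlgAut_apply]
  constructor
  · have h1 : A = U * (D * star U) := by rw [hst]; simp only [Matrix.mul_assoc]
    have h1t : A.trace = (U * (D * star U)).trace := congrArg Matrix.trace h1
    rw [h1t, Matrix.trace_mul_comm, Matrix.mul_assoc, hU1, Matrix.mul_one, hDdef,
      Matrix.trace_diagonal]
    simp
  · have h2 : A * A = U * ((D * D) * star U) := by
      conv_lhs => rw [hst]
      simp only [Matrix.mul_assoc]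
      rw [← Matrix.mul_assoc (star U) U, hU1, Matrix.one_mul]
    have h2t : (A*A).trace = (U * ((D*D) * star U)).trace := congrArg Matrix.trace h2
    rw [h2t, Matrix.trace_mul_comm, Matrix.mul_assoc, hU1, Matrix.mul_one, hDdef,
      Matrix.diagonal_mul_diagonal, Matrix.trace_diagonal]
    simp [sq]

private lemma moore_aux_cubic (A : Matrix V V ℝ) (hA : A.IsHermitian) (c1 c2 c3 : ℝ)
    (hkey : A*(A*A) + A*A = c1 • A + c2 • (A*A) + c3 • (1 : Matrix V V ℝ)) (i : V) :
    (hA.eigenvalues i)^3 + (hA.eigenvalues i)^2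
      = c1 * hA.eigenvalues i + c2 * (hA.eigenvalues i)^2 + c3 := by
  set lam := hA.eigenvalues i with hlam
  set v : V → ℝ := ⇑(hA.eigenvectorBasis i) with hv
  have hv1 : A *ᵥ v = lam • v := hA.mulVec_eigenvectorBasis i
  have hv2 : (A*A) *ᵥ v = (lam^2) • v := by
    rw [← Matrix.mulVec_mulVec, hv1, Matrix.mulVec_smul, hv1, smul_smul, sq]
  have hv3 : (A*(A*A)) *ᵥ v = (lam^3) • v := by
    rw [← Matrix.mulVec_mulVec, hv2, Matrix.mulVec_smul, hv1, smul_smul]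
    try congr 1
    try ring
  have happ := congrArg (fun M => M *ᵥ v) hkey
  simp only [Matrix.add_mulVec, Matrix.smul_mulVec, Matrix.one_mulVec, hv1, hv2, hv3]
    at happ
  have hcomb : (lam^3 + lam^2 - (c1 * lam + c2 * lam^2 + c3)) • v = 0 := by
    linear_combination (norm := module) happ
  have hvne : v ≠ 0 := by
    intro h0
    have := hA.eigenvectorBasis.orthonormal.ne_zero i
    apply this
    ext j
    exact congrFun h0 j
  rcases smul_eq_zero.mp hcomb with h | h
  · linarith [sub_eq_zero.mp (by linarith : lam^3 + lam^2 - (c1 * lam + c2 * lam^2 + c3) - 0 = 0)]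
  · exact absurd h hvne

private lemma moore_aux_endgame (k : ℕ) (hk2 : 2 ≤ k)
    (hcard : Fintype.card V = k^2 + 1) (ev : V → ℝ)
    (hroot : ∀ i, (ev i)^3 + (ev i)^2
      = (2*(k:ℝ)-1) * ev i + (k:ℝ) * (ev i)^2 + (-((k:ℝ)*((k:ℝ)-1))))
    (hsum : ∑ i, ev i = 0)
    (hsum2 : ∑ i, (ev i)^2 = (Fintype.card V : ℝ) * k) :
    k = 2 ∨ k = 3 ∨ k = 7 ∨ k = 57 := by
  have hk2R : (2:ℝ) ≤ (k:ℝ) := by exact_mod_cast hk2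
  set s : ℝ := Real.sqrt (4*(k:ℝ)-3) with hsdef
  have hs2 : s^2 = 4*(k:ℝ)-3 := Real.sq_sqrt (by linarith)
  have hspos : 0 < s := Real.sqrt_pos.mpr (by linarith)
  set t1 : ℝ := (-1+s)/2 with ht1
  set t2 : ℝ := (-1-s)/2 with ht2
  have hcases : ∀ i, ev i = (k:ℝ) ∨ ev i = t1 ∨ ev i = t2 := by
    intro i
    have hfac : ((ev i) - k) * (((ev i) - t1) * ((ev i) - t2)) = 0 := by
      rw [ht1, ht2]
      linear_combination (hroot i) - ((ev i - (k:ℝ))/4) * hs2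
    rcases mul_eq_zero.mp hfac with h | h
    · exact Or.inl (by linarith [sub_eq_zero.mp h])
    · rcases mul_eq_zero.mp h with h' | h'
      · exact Or.inr (Or.inl (sub_eq_zero.mp h'))
      · exact Or.inr (Or.inr (sub_eq_zero.mp h'))
  have hk_ne_t1 : (k:ℝ) ≠ t1 := by
    intro h
    rw [ht1] at h
    nlinarith [hs2]
  have hk_ne_t2 : (k:ℝ) ≠ t2 := by
    intro h; rw [ht2] at h; nlinarith [hs2, hspos]
  have ht1_ne_t2 : t1 ≠ t2 := by
    intro h; rw [ht1, ht2] at h; nlinarith [hspos]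
  set F0 : Finset V := Finset.univ.filter (fun i => ev i = (k:ℝ)) with hF0
  set F1 : Finset V := Finset.univ.filter (fun i => ev i = t1) with hF1
  set F2 : Finset V := Finset.univ.filter (fun i => ev i = t2) with hF2
  have hd01 : Disjoint F0 F1 := by
    rw [Finset.disjoint_left]; intro i h0 h1
    simp [hF0] at h0; simp [hF1] at h1
    exact hk_ne_t1 (h0 ▸ h1 ▸ rfl : (k:ℝ) = t1)
  have hd02 : Disjoint F0 F2 := by
    rw [Finset.disjoint_left]; intro i h0 h1
    simp [hF0] at h0; simp [hF2] at h1
    exact hk_ne_t2 (h0 ▸ h1 ▸ rfl : (k:ℝ) = t2)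
  have hd12 : Disjoint F1 F2 := by
    rw [Finset.disjoint_left]; intro i h0 h1
    simp [hF1] at h0; simp [hF2] at h1
    exact ht1_ne_t2 (h0 ▸ h1 ▸ rfl : t1 = t2)
  have hcover : Finset.univ = F0 ∪ (F1 ∪ F2) := by
    ext i
    simp only [Finset.mem_univ, true_iff, Finset.mem_union, hF0, hF1, hF2, Finset.mem_filter,
      Finset.mem_univ, true_and]
    exact hcases i
  set a : ℕ := F0.card with ha
  set m1 : ℕ := F1.card with hm1
  set m2 : ℕ := F2.card with hm2
  have hdisj : Disjoint F0 (F1 ∪ F2) := Finset.disjoint_union_right.mpr ⟨hd01, hd02⟩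
  have hsplit : ∀ g : ℝ → ℝ, ∑ i, g (ev i)
      = (a:ℝ) * g (k:ℝ) + ((m1:ℝ) * g t1 + (m2:ℝ) * g t2) := by
    intro g
    rw [show ∑ i, g (ev i) = ∑ i ∈ (F0 ∪ (F1 ∪ F2)), g (ev i) from by rw [← hcover],
      Finset.sum_union hdisj, Finset.sum_union hd12]
    congr 1
    · rw [Finset.sum_congr rfl (fun i hi => by
        rw [show ev i = (k:ℝ) from by simpa [hF0] using hi]), Finset.sum_const,
        nsmul_eq_mul]
    congr 1
    · rw [Finset.sum_congr rfl (fun i hi => by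
        rw [show ev i = t1 from by simpa [hF1] using hi]), Finset.sum_const, nsmul_eq_mul]
    · rw [Finset.sum_congr rfl (fun i hi => by
        rw [show ev i = t2 from by simpa [hF2] using hi]), Finset.sum_const, nsmul_eq_mul]
  have hcardsum : a + m1 + m2 = k^2 + 1 := by
    rw [← hcard, ← Finset.card_univ, hcover, Finset.card_union_of_disjoint hdisj,
      Finset.card_union_of_disjoint hd12]
    ring
  have E0 : (a:ℝ) + m1 + m2 = (k:ℝ)^2 + 1 := by
    exact_mod_cast congrArg (Nat.cast : ℕ → ℝ) hcardsum
  have E1 : (a:ℝ) * k + ((m1:ℝ) * t1 + (m2:ℝ) * t2) = 0 := by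
    rw [← hsplit (fun x => x)]; exact hsum
  have E2 : (a:ℝ) * (k:ℝ)^2 + ((m1:ℝ) * t1^2 + (m2:ℝ) * t2^2) = ((k:ℝ)^2+1) * k := by
    have := hsplit (fun x => x^2)
    rw [← this, hsum2, hcard]
    push_cast
    ring
  have hq1 : t1^2 = -t1 + ((k:ℝ)-1) := by rw [ht1]; linear_combination hs2/4
  have hq2 : t2^2 = -t2 + ((k:ℝ)-1) := by rw [ht2]; linear_combination hs2/4
  have haR : (a:ℝ) * ((k:ℝ)^2+1) = 1 * ((k:ℝ)^2+1) := by
    linear_combination E2 + E1 - (m1:ℝ)*hq1 - (m2:ℝ)*hq2 - ((k:ℝ)-1)*E0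
  have ha1 : (a:ℝ) = 1 := mul_right_cancel₀ (by positivity) haR
  have hdm : s * ((m1:ℝ) - m2) = (k:ℝ)^2 - 2*k := by
    rw [ht1, ht2] at E1
    linear_combination 2*E1 + E0 - (2*(k:ℝ)+1)*ha1
  set d : ℤ := (m1:ℤ) - (m2:ℤ) with hddef
  have hdR : s * (d:ℝ) = (k:ℝ)^2 - 2*k := by push_cast [hddef]; exact hdm
  by_cases hd0 : d = 0
  · left
    rw [hd0] at hdR
    simp at hdR
    have hkk : (k:ℝ)^2 = 2*k := by linarith
    have hkn : k^2 = 2*k := by exact_mod_cast hkk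
    nlinarith [hkn, hk2]
  · have hZR : (4*(k:ℝ)-3) * (d:ℝ)^2 = ((k:ℝ)^2 - 2*k)^2 := by
      rw [← hs2, ← hdR]; ring
    have hZ : (4*(k:ℤ) - 3) * d^2 = ((k:ℤ)^2 - 2*k)^2 := by exact_mod_cast hZR
    set N : ℤ := (k:ℤ)^2 - 2*k with hNdef
    have hpd : d^2 ∣ N^2 := ⟨4*(k:ℤ)-3, by linear_combination (-1 : ℤ) * hZ⟩
    have hdvd : d ∣ N := (Int.pow_dvd_pow_iff (two_ne_zero)).mp hpd
    obtain ⟨t, ht⟩ := hdvd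
    have hd2ne : d^2 ≠ 0 := pow_ne_zero 2 hd0
    have ht2' : t^2 = 4*(k:ℤ) - 3 := by
      have : d^2 * t^2 = d^2 * (4*(k:ℤ)-3) := by
        linear_combination (-(d*t + N)) * ht - hZ
      exact mul_left_cancel₀ hd2ne this
    have h15 : t ∣ 15 := by
      refine ⟨t*(4*(k:ℤ)-5) - 16*d, ?_⟩
      linear_combination (-(4*(k:ℤ)-5)) * ht2' - 16 * ht + 16 * hNdef
    have hT15 : t.natAbs ∣ 15 := by
      have := Int.natAbs_dvd_natAbs.mpr h15
      simpa using this
    have hTT : (t.natAbs : ℤ) * (t.natAbs : ℤ) = 4*(k:ℤ) - 3 := by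
      rw [Int.natAbs_mul_self']
      linear_combination ht2'
    have hTle : t.natAbs ≤ 15 := Nat.le_of_dvd (by norm_num) hT15
    generalize hg : t.natAbs = T at hT15 hTT hTle
    interval_cases T <;> omega

end MooreAux

/-- **Moore graphs of diameter 2.**  A distance-regular graph of diameter `2` and girth
`5` with valency `k` satisfies `k ∈ {2, 3, 7, 57}`. -/
theorem moore_graph_valency {V : Type*} [Fintype V] (G : SimpleGraph V)
    (b c : ℕ → ℕ) (k : ℕ) (hG : IsDistRegular G 2 b c) (hgirth : G.girth = 5)
    (hk : b 0 = k) :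
    k = 2 ∨ k = 3 ∨ k = 7 ∨ k = 57 := by
  classical
  obtain ⟨hconn, hdiam, hb, hc⟩ := hG
  haveI : Nonempty V := hconn.nonempty
  -- diameter facts
  have hediam : G.ediam = 2 := by
    have hne : G.ediam ≠ ⊤ := by
      intro ht
      rw [SimpleGraph.diam, ht] at hdiam
      simp at hdiam
    rw [SimpleGraph.diam] at hdiam
    exact (ENat.toNat_eq_iff (by norm_num)).mp hdiam
  have hdist2 : ∀ u v : V, G.dist u v ≤ 2 := by
    intro u v
    have h := G.dist_le_diam (u := u) (v := v) (by rw [hediam]; simp)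
    rwa [SimpleGraph.diam, hediam, show ((2:ℕ∞)).toNat = 2 from rfl] at h
  -- girth facts
  have h5 : ∀ (a : V) (w : G.Walk a a), w.IsCycle → 5 ≤ w.length := by
    intro a w hw
    have he : G.egirth = 5 := by
      rw [SimpleGraph.girth] at hgirth
      exact (ENat.toNat_eq_iff (by norm_num)).mp hgirth
    have hle : G.egirth ≤ w.length := by
      rw [SimpleGraph.egirth]
      exact le_trans (iInf_le _ a) (le_trans (iInf_le _ w) (iInf_le _ hw))
    rw [he] at hle
    exact_mod_cast hle
  have htri : ∀ {x y z : V}, G.Adj x y → G.Adj y z → G.Adj z x → False := by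
    intro x y z hxy hyz hzx
    have hcyc : (SimpleGraph.Walk.cons hxy (SimpleGraph.Walk.cons hyz
        (SimpleGraph.Walk.cons hzx SimpleGraph.Walk.nil))).IsCycle := by
      simp [SimpleGraph.Walk.isCycle_def, SimpleGraph.Walk.isTrail_def, hxy.ne, hxy.ne',
        hyz.ne, hyz.ne', hzx.ne, hzx.ne', Sym2.eq_iff]
    have := h5 x _ hcyc
    simp at this
  have hC4 : ∀ {u v x y : V}, u ≠ v → x ≠ y → G.Adj u x → G.Adj x v → G.Adj v y →
      G.Adj y u → False := by
    intro u v x y huv hxy h1 h2 h3 h4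
    have hcyc : (SimpleGraph.Walk.cons h1 (SimpleGraph.Walk.cons h2 (SimpleGraph.Walk.cons h3
        (SimpleGraph.Walk.cons h4 SimpleGraph.Walk.nil)))).IsCycle := by
      simp [SimpleGraph.Walk.isCycle_def, SimpleGraph.Walk.isTrail_def, h1.ne, h1.ne',
        h2.ne, h2.ne', h3.ne, h3.ne', h4.ne, h4.ne', huv, huv.symm, hxy, hxy.symm, Sym2.eq_iff]
    have := h5 u _ hcyc
    simp at this
  -- degree
  have hdeg : ∀ v : V, G.degree v = k := by
    intro v
    have h := hb 0 (by norm_num) v v (by simp)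
    have hset : {w : V | G.Adj v w ∧ G.dist v w = 0 + 1} = ↑(G.neighborFinset v) := by
      ext w
      simp [SimpleGraph.dist_eq_one_iff_adj]
    rw [hset, Set.ncard_coe_finset, hk] at h
    exact h
  -- unique common neighbours
  have hcn : ∀ u v : V, u ≠ v → ¬ G.Adj u v → ∃! w, G.Adj u w ∧ G.Adj w v := by
    intro u v hne hna
    have hd : G.dist u v = 2 := by
      have h0 : G.dist u v ≠ 0 := fun h => hne (((hconn u v).dist_eq_zero_iff).mp h)
      have h1 : G.dist u v ≠ 1 := fun h => hna (SimpleGraph.dist_eq_one_iff_adj.mp h)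
      have := hdist2 u v
      omega
    obtain ⟨w, hw⟩ := hconn.exists_walk_length_eq_dist u v
    rw [hd] at hw
    obtain ⟨x, hux, hxv⟩ : ∃ x, G.Adj u x ∧ G.Adj x v := by
      cases w with
      | nil => simp at hw
      | cons h1 w' =>
        cases w' with
        | nil => simp at hw
        | cons h2 w'' =>
          cases w'' with
          | nil => exact ⟨_, h1, h2⟩
          | cons h3 w''' => simp [SimpleGraph.Walk.length_cons] at hw
    refine ⟨x, ⟨hux, hxv⟩, ?_⟩
    rintro y ⟨huy, hyv⟩
    by_contra hxy
    exact hC4 hne (Ne.symm hxy) hux hxv (G.adj_symm hyv) (G.adj_symm huy)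
  -- k ≥ 2
  have hk2 : 2 ≤ k := by
    obtain ⟨u, v, huv⟩ := SimpleGraph.exists_dist_eq_diam (G := G)
    rw [hdiam] at huv
    have hne : u ≠ v := by
      intro h; rw [h] at huv; simp [SimpleGraph.dist_self] at huv
    have hna : ¬ G.Adj u v := by
      intro h; rw [← SimpleGraph.dist_eq_one_iff_adj] at h; omega
    obtain ⟨w, ⟨h1, h2⟩, -⟩ := hcn u v hne hna
    have hsub : ({u, v} : Finset V) ⊆ G.neighborFinset w := by
      intro x hx
      simp only [Finset.mem_insert, Finset.mem_singleton] at hx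
      rcases hx with rfl | rfl
      · simp [SimpleGraph.mem_neighborFinset, G.adj_symm h1]
      · simp [SimpleGraph.mem_neighborFinset, h2]
    have hcard2 : ({u, v} : Finset V).card = 2 := by
      rw [Finset.card_insert_of_notMem (by simp [hne]), Finset.card_singleton]
    calc 2 = ({u, v} : Finset V).card := hcard2.symm
      _ ≤ (G.neighborFinset w).card := Finset.card_le_card hsub
      _ = k := by rw [SimpleGraph.card_neighborFinset_eq_degree, hdeg w]
  -- vertex count
  have hcard : Fintype.card V = k^2 + 1 :=
    moore_aux_count k hk2 hdeg hdist2 hconn @htri hcn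
  -- matrix and spectrum
  obtain ⟨A, hAsym, hkey, htr0, htr2⟩ := moore_aux_matrix k hdeg @htri hcn
  obtain ⟨htrace1, htrace2⟩ := moore_aux_traces A hAsym
  have hroot : ∀ i, (hAsym.eigenvalues i)^3 + (hAsym.eigenvalues i)^2
      = (2*(k:ℝ)-1) * hAsym.eigenvalues i + (k:ℝ) * (hAsym.eigenvalues i)^2
        + (-((k:ℝ)*((k:ℝ)-1))) :=
    fun i => moore_aux_cubic A hAsym _ _ _ hkey i
  have hsum : ∑ i, hAsym.eigenvalues i = 0 := by rw [← htrace1]; exact htr0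
  have hsum2 : ∑ i, (hAsym.eigenvalues i)^2 = (Fintype.card V : ℝ) * k := by
    rw [← htrace2]; exact htr2
  exact moore_aux_endgame k hk2 hcard hAsym.eigenvalues hroot hsum hsum2
end
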